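/- For every p ∈ (0,1), the infinite product ∏_{j=1}^∞ (1 − (1−p)^j)² is at least exp(−π²/(3p)). -/

import Mathlib

open Real

/-- For `p ∈ (0,1)`, `∏_{j=1}^∞ (1 - (1-p)^j)² ≥ exp(-π²/(3p))`. -/
theorem stmt2 (p : ℝ) (hp0 : 0 < p) (hp1 : p < 1) :
    Real.exp (-(Real.pi ^ 2) / (3 * p)) ≤ ∏' j : ℕ, (1 - (1 - p) ^ (j + 1)) ^ 2 := by
  set q : ℝ := 1 - p with hqdef
  have hq0 : 0 < q := by rw [hqdef]; linarith
  have hq1 : q < 1 := by rw [hqdef]; linarith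
  have hqpow : ∀ m : ℕ, q ^ (m + 1) < 1 := fun m =>
    pow_lt_one₀ hq0.le hq1 (Nat.succ_ne_zero m)
  have hqpow0 : ∀ m : ℕ, 0 < q ^ (m + 1) := fun m => pow_pos hq0 _
  have hpos : ∀ j : ℕ, 0 < 1 - q ^ (j + 1) := fun j => by have := hqpow j; linarith
  -- the double sum terms
  set f : ℕ × ℕ → ℝ := fun x => (q ^ (x.2 + 1)) ^ (x.1 + 1) / ((x.1 : ℝ) + 1) with hfdef
  have hf0 : ∀ x, 0 ≤ f x := by
    intro x
    simp only [hfdef]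
    positivity
  -- rows (fixed j): summing over n gives -log(1 - q^(j+1))
  have hrow : ∀ j : ℕ, HasSum (fun n => f (n, j)) (-Real.log (1 - q ^ (j + 1))) := by
    intro j
    simp only [hfdef]
    exact hasSum_pow_div_log_of_abs_lt_one
      (by rw [abs_of_nonneg (hqpow0 j).le]; exact hqpow j)
  -- columns (fixed n): geometric sum over j
  have hcol : ∀ n : ℕ, HasSum (fun j => f (n, j))
      (q ^ (n + 1) / (1 - q ^ (n + 1)) / (n + 1)) := by
    intro n
    have hg : HasSum (fun j : ℕ => (q ^ (n + 1)) ^ j) (1 / (1 - q ^ (n + 1))) := by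
      simpa [one_div] using hasSum_geometric_of_lt_one (hqpow0 n).le (hqpow n)
    have h2 := hg.mul_left (q ^ (n + 1) / ((n : ℝ) + 1))
    have : (fun j : ℕ => q ^ (n + 1) / ((n : ℝ) + 1) * (q ^ (n + 1)) ^ j)
        = fun j : ℕ => f (n, j) := by
      funext j
      simp only [hfdef]
      have e : q ^ (n + 1) * (q ^ (n + 1)) ^ j = (q ^ (j + 1)) ^ (n + 1) := by
        rw [← pow_succ', ← pow_mul, Nat.mul_comm, pow_mul]
      rw [div_mul_eq_mul_div, e]
    rw [this] at h2
    convert h2 using 1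
    · rfl
    · ring
  -- column bound : col n ≤ 1/(p (n+1)^2)
  have hcolbound : ∀ n : ℕ,
      q ^ (n + 1) / (1 - q ^ (n + 1)) / (n + 1) ≤ 1 / (p * ((n : ℝ) + 1) ^ 2) := by
    intro n
    have hn1 : (0 : ℝ) < (n : ℝ) + 1 := by positivity
    have hqn : (0 : ℝ) < q ^ n := pow_pos hq0 n
    have hden : 0 < 1 - q ^ (n + 1) := hpos n
    -- key : (n+1) p q^n ≤ 1 - q^(n+1)
    have key : ((n : ℝ) + 1) * p * q ^ n ≤ 1 - q ^ (n + 1) := by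
      have hgeom : 1 - q ^ (n + 1) = (1 - q) * ∑ i ∈ Finset.range (n + 1), q ^ i := by
        linear_combination geom_sum_mul q (n + 1)
      have hconst : ∑ _i ∈ Finset.range (n + 1), q ^ n = ((n : ℝ) + 1) * q ^ n := by
        rw [Finset.sum_const, Finset.card_range, nsmul_eq_mul]
        push_cast; ring
      have hsum : ((n : ℝ) + 1) * q ^ n ≤ ∑ i ∈ Finset.range (n + 1), q ^ i := by
        rw [← hconst]
        refine Finset.sum_le_sum fun i hi => ?_
        exact pow_le_pow_of_le_one hq0.le hq1.le
          (Nat.lt_succ_iff.mp (Finset.mem_range.mp hi))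
      have hp' : 1 - q = p := by rw [hqdef]; ring
      rw [hgeom, hp']
      calc ((n : ℝ) + 1) * p * q ^ n = p * (((n : ℝ) + 1) * q ^ n) := by ring
        _ ≤ p * ∑ i ∈ Finset.range (n + 1), q ^ i :=
            mul_le_mul_of_nonneg_left hsum hp0.le
    have hBA : q ^ (n + 1) ≤ q ^ n :=
      pow_le_pow_of_le_one hq0.le hq1.le (Nat.le_succ n)
    rw [div_div, div_le_div_iff₀ (by positivity) (by positivity)]
    nlinarith [mul_le_mul_of_nonneg_left key hn1.le,
      mul_le_mul_of_nonneg_left hBA (by positivity : (0:ℝ) ≤ p * ((n:ℝ) + 1) ^ 2),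
      mul_pos hden hn1]
  -- summability of the bound
  have hzeta : HasSum (fun n : ℕ => 1 / ((n : ℝ) + 1) ^ 2) (π ^ 2 / 6) := by
    have h := (hasSum_nat_add_iff (f := fun n : ℕ => (1 : ℝ) / (n : ℝ) ^ 2)
      (g := π ^ 2 / 6) 1).mpr (by simpa using hasSum_zeta_two)
    have e : (fun n : ℕ => (1 : ℝ) / (↑(n + 1) : ℝ) ^ 2)
        = fun n : ℕ => 1 / ((n : ℝ) + 1) ^ 2 := by
      funext n; push_cast; ring
    rwa [e] at h
  have hbound_hasSum : HasSum (fun n : ℕ => 1 / (p * ((n : ℝ) + 1) ^ 2)) (π ^ 2 / (6 * p)) := by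
    have h := hzeta.mul_left (1 / p)
    have e1 : (fun n : ℕ => 1 / p * (1 / ((n : ℝ) + 1) ^ 2))
        = fun n : ℕ => 1 / (p * ((n : ℝ) + 1) ^ 2) := by
      funext n; field_simp
    have e2 : 1 / p * (π ^ 2 / 6) = π ^ 2 / (6 * p) := by field_simp
    rwa [e1, e2] at h
  -- summability of the double sum
  have hsumf : Summable f := by
    rw [summable_prod_of_nonneg hf0]
    refine ⟨fun n => (hcol n).summable, ?_⟩
    apply Summable.of_nonneg_of_le (fun n => tsum_nonneg fun j => hf0 (n, j))
      (fun n => ?_) hbound_hasSum.summable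
    rw [(hcol n).tsum_eq]
    exact hcolbound n
  -- the key estimate on S = ∑ⱼ -log(1 - q^(j+1))
  have hSsummable : Summable (fun j : ℕ => -Real.log (1 - q ^ (j + 1))) := by
    have hswap : Summable (fun x : ℕ × ℕ => f (x.2, x.1)) := hsumf.prod_symm
    have h2 := ((summable_prod_of_nonneg (fun x => hf0 (x.2, x.1))).mp hswap).2
    exact h2.congr fun j => (hrow j).tsum_eq
  have hS : ∑' j : ℕ, -Real.log (1 - q ^ (j + 1)) ≤ π ^ 2 / (6 * p) := by
    have e1 : ∑' j : ℕ, -Real.log (1 - q ^ (j + 1)) = ∑' (j : ℕ) (n : ℕ), f (n, j) :=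
      tsum_congr fun j => (hrow j).tsum_eq.symm
    have e2 : ∑' (j : ℕ) (n : ℕ), f (n, j) = ∑' (n : ℕ) (j : ℕ), f (n, j) :=
      Summable.tsum_comm (f := fun n j => f (n, j)) hsumf
    rw [e1, e2]
    calc ∑' (n : ℕ) (j : ℕ), f (n, j) = ∑' n : ℕ, q ^ (n + 1) / (1 - q ^ (n + 1)) / (n + 1) :=
          tsum_congr fun n => (hcol n).tsum_eq
      _ ≤ ∑' n : ℕ, 1 / (p * ((n : ℝ) + 1) ^ 2) := by
          refine Summable.tsum_le_tsum hcolbound ?_ hbound_hasSum.summable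
          refine Summable.of_nonneg_of_le (fun n => ?_) hcolbound hbound_hasSum.summable
          have h1 := hqpow0 n
          have h2 := hpos n
          positivity
      _ = π ^ 2 / (6 * p) := hbound_hasSum.tsum_eq
  -- summability of the logs of the factors
  have hlogsum : Summable (fun j : ℕ => Real.log ((1 - q ^ (j + 1)) ^ 2)) := by
    apply (hSsummable.mul_left (-2)).congr
    intro j
    rw [Real.log_pow]
    push_cast; ring
  -- relate product to exp of sum of logs
  have hprod := Real.rexp_tsum_eq_tprod (f := fun j : ℕ => (1 - q ^ (j + 1)) ^ 2)
    (fun j => pow_pos (hpos j) 2) hlogsum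
  beta_reduce at hprod
  rw [← hprod]
  rw [Real.exp_le_exp]
  have e3 : ∑' j : ℕ, Real.log ((1 - q ^ (j + 1)) ^ 2)
      = (-2) * ∑' j : ℕ, -Real.log (1 - q ^ (j + 1)) := by
    rw [← tsum_mul_left]
    exact tsum_congr fun j => by rw [Real.log_pow]; push_cast; ring
  rw [e3]
  have : -(π ^ 2) / (3 * p) = (-2) * (π ^ 2 / (6 * p)) := by field_simp; ring
  rw [this]
  exact mul_le_mul_of_nonpos_left hS (by norm_num)
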